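/- arXiv:1208.0250 — 3 statements merged into one kernel-verified Lean document; each statement's English description precedes it below -/
import Mathlib

section
/- Let p be an odd prime, e ≥ 1, and 1 ≤ c ≤ p-1. Then f(c·p^e - 1) - f(c·p^{e-1} - 1) ≡ c·(1 - 2^{p-1})·p^{e-1}·f(c·p^{e-1} - 1) (mod p^{e+1}), where f(n) = ∑_{k=0}^{n} C(n,k)^{-1}. -/
def f (n : ℕ) : ℚ := ∑ k ∈ Finset.range (n + 1), ((n.choose k : ℚ))⁻¹

def T (m : ℕ) : ℚ := ∑ k ∈ Finset.Icc 1 m, 2 ^ k / k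

lemma choose_ne (n k : ℕ) (h : k ≤ n) : ((n.choose k : ℚ)) ≠ 0 := by
  exact_mod_cast (Nat.choose_pos h).ne'

lemma key_pair (n k : ℕ) (h : k ≤ n) :
    ((n+1).choose k : ℚ)⁻¹ + ((n+1).choose (k+1) : ℚ)⁻¹
      = ((n:ℚ)+2) / ((n:ℚ)+1) * ((n.choose k : ℚ))⁻¹ := by
  have e1 : ((n:ℚ)+1) * (n.choose k) = ((n+1).choose (k+1)) * ((k:ℚ)+1) := by
    exact_mod_cast congrArg (Nat.cast : ℕ → ℚ) (Nat.add_one_mul_choose_eq n k)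
  have e2n : (n+1) * n.choose k = (n+1).choose k * (n + 1 - k) := by
    have h1 : (n+1).choose k = (n+1).choose (n+1-k) := (Nat.choose_symm (by omega)).symm
    have h2 : n.choose k = n.choose (n - k) := (Nat.choose_symm h).symm
    have h3 : (n+1) * n.choose (n-k) = (n+1).choose (n-k+1) * (n-k+1) :=
      Nat.add_one_mul_choose_eq n (n-k)
    rw [h1, h2]
    have : n + 1 - k = n - k + 1 := by omega
    rw [this, h3, Nat.mul_comm]
  have e2 : ((n:ℚ)+1) * (n.choose k) = ((n+1).choose k) * ((n:ℚ) + 1 - k) := by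
    have := congrArg (Nat.cast : ℕ → ℚ) e2n
    push_cast [Nat.cast_sub (by omega : k ≤ n + 1)] at this
    linarith [this]
  have h1 : ((n+1).choose k : ℚ) ≠ 0 := choose_ne _ _ (by omega)
  have h2 : ((n+1).choose (k+1) : ℚ) ≠ 0 := choose_ne _ _ (by omega)
  have h3 : ((n.choose k : ℚ)) ≠ 0 := choose_ne _ _ h
  have h4 : ((n:ℚ)+1) ≠ 0 := by positivity
  field_simp
  ring_nf
  ring_nf at e1 e2
  nlinarith [e1, e2, sq_nonneg ((n:ℚ)+1)]


lemma f_rec (n : ℕ) : f (n+1) = 1 + ((n:ℚ)+2) / (2*((n:ℚ)+1)) * f n := by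
  have hsum : ∑ k ∈ Finset.range (n+1),
      (((n+1).choose k : ℚ)⁻¹ + ((n+1).choose (k+1) : ℚ)⁻¹)
      = ((n:ℚ)+2) / ((n:ℚ)+1) * f n := by
    rw [f, Finset.mul_sum]
    exact Finset.sum_congr rfl fun k hk => key_pair n k (by
      simpa using Nat.lt_succ_iff.mp (Finset.mem_range.mp hk))
  rw [Finset.sum_add_distrib] at hsum
  have h1 : ∑ k ∈ Finset.range (n+1), ((n+1).choose k : ℚ)⁻¹ = f (n+1) - 1 := by
    have := Finset.sum_range_succ (fun k => (((n+1).choose k : ℚ))⁻¹) (n+1)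
    rw [f]
    simp only [Nat.choose_self] at this
    rw [this]; simp
  have h2 : ∑ k ∈ Finset.range (n+1), ((n+1).choose (k+1) : ℚ)⁻¹ = f (n+1) - 1 := by
    have := Finset.sum_range_succ' (fun k => (((n+1).choose k : ℚ))⁻¹) (n+1)
    rw [f, this]
    simp
  rw [h1, h2] at hsum
  have h4 : ((n:ℚ)+1) ≠ 0 := by positivity
  field_simp at hsum ⊢
  linarith [hsum]

lemma f_formula (n : ℕ) : f n = ((n:ℚ)+1) / 2^(n+1) * T (n+1) := by
  induction n with
  | zero =>
    simp [f, T]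
  | succ n ih =>
    rw [f_rec, ih]
    have hT : T (n+2) = T (n+1) + 2^(n+2) / ((n:ℚ)+2) := by
      rw [T, T, show n+2 = (n+1)+1 from rfl, Finset.sum_Icc_succ_top (by omega : 1 ≤ n+1+1)]
      push_cast; congr 1; ring
    rw [show n+1+1 = n+2 from rfl, hT, T]
    have h4 : ((n:ℚ)+1) ≠ 0 := by positivity
    have h5 : ((n:ℚ)+2) ≠ 0 := by positivity
    have h6 : (2:ℚ)^(n+1) ≠ 0 := by positivity
    push_cast
    field_simp
    ring

section Padic
variable {p : ℕ} [hp : Fact p.Prime]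


lemma norm_nat_inv_eq (k : ℕ) (hk : k ≠ 0) :
    ‖((k:ℚ_[p]))⁻¹‖ = (p : ℝ) ^ (padicValNat p k : ℤ) := by
  rw [norm_inv, Padic.norm_eq_zpow_neg_valuation (by exact_mod_cast hk), Padic.valuation_natCast,
    ← zpow_neg, neg_neg]

lemma norm_nat_inv_le_of_lt_pow {k s : ℕ} (hk : k ≠ 0) (hlt : k < p ^ s) :
    ‖((k:ℚ_[p]))⁻¹‖ ≤ (p : ℝ) ^ ((s:ℤ) - 1) := by
  rw [norm_nat_inv_eq k hk]
  have hv : padicValNat p k < s := by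
    by_contra h
    push_neg at h
    have : p ^ s ≤ k := le_trans (Nat.pow_le_pow_right hp.out.pos h)
      (Nat.le_of_dvd (Nat.pos_of_ne_zero hk) pow_padicValNat_dvd)
    omega
  apply zpow_le_zpow_right₀ (by exact_mod_cast hp.out.one_le)
  omega

lemma norm_nat_inv_eq_one_of_not_dvd {k : ℕ} (hk : k ≠ 0) (h : ¬ p ∣ k) :
    ‖((k:ℚ_[p]))⁻¹‖ = 1 := by
  rw [norm_nat_inv_eq k hk, padicValNat.eq_zero_of_not_dvd h]
  simp

lemma three_le_p (hodd : Odd p) : 3 ≤ p := by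
  have h2 := hp.out.two_le
  rcases Nat.lt_or_ge p 3 with h3 | h3
  · interval_cases p
    · exact absurd hodd (by decide)
  · exact h3

lemma norm_nat_inv_le_self (hodd : Odd p) {i : ℕ} (hi : 2 ≤ i) :
    ‖((i:ℚ_[p]))⁻¹‖ ≤ (p : ℝ) ^ ((i:ℤ) - 2) := by
  rw [norm_nat_inv_eq i (by omega)]
  apply zpow_le_zpow_right₀ (by exact_mod_cast hp.out.one_le)
  set v := padicValNat p i with hv
  have hp3 : 3 ≤ p := three_le_p hodd
  rcases Nat.eq_zero_or_pos v with h0 | h1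
  · omega
  · have h2 : p ^ v ≤ i := Nat.le_of_dvd (by omega) pow_padicValNat_dvd
    have h3 : 3 ^ v ≤ p ^ v := Nat.pow_le_pow_left hp3 v
    have h4 : v + 2 ≤ 3 ^ v := by
      clear_value v
      clear hv h2 h3
      induction v with
      | zero => omega
      | succ n ih =>
        rcases Nat.eq_zero_or_pos n with rfl | hn
        · norm_num
        · have := ih (by omega)
          calc n + 1 + 2 ≤ 3 * (n + 2) := by omega
          _ ≤ 3 * 3 ^ n := by omega
          _ = 3 ^ (n+1) := by ring
    omega

lemma norm_int_sub_le_pow {a b : ℤ} {n : ℕ} (h : (p:ℤ) ^ n ∣ a - b) :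
    ‖(a : ℚ_[p]) - (b : ℚ_[p])‖ ≤ (p : ℝ) ^ (-(n:ℤ)) := by
  have := (Padic.norm_int_le_pow_iff_dvd (a - b) n).mpr h
  push_cast at this
  exact this

lemma norm_two_eq_one (hodd : Odd p) : ‖((2:ℚ_[p]))‖ = 1 := by
  have h2 : ‖((2:ℤ) : ℚ_[p])‖ = 1 := by
    rcases lt_or_eq_of_le (Padic.norm_int_le_one (p := p) (2:ℤ)) with h | h
    · exfalso
      have hd := (Padic.norm_intCast_lt_one_iff (k := (2:ℤ))).mp h
      have h3 := three_le_p (p := p) hodd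
      have : p ∣ 2 := by exact_mod_cast hd
      have := Nat.le_of_dvd (by norm_num) this
      omega
    · exact h
  simpa using h2

lemma norm_two_pow_eq_one (hodd : Odd p) (k : ℕ) : ‖((2:ℚ_[p]))^k‖ = 1 := by
  rw [norm_pow, norm_two_eq_one hodd, one_pow]


lemma choose_zmod (j : ℕ) (hj : j ≤ p - 1) :
    (((p-1).choose j : ℕ) : ZMod p) = (-1)^j := by
  induction j with
  | zero => simp
  | succ n ih =>
    have hp1 : 1 ≤ p := hp.out.one_le
    have hpas : p.choose (n+1) = (p-1).choose n + (p-1).choose (n+1) := by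
      conv_lhs => rw [show p = (p-1)+1 by omega]
      exact Nat.choose_succ_succ _ _
    have hdvd : p ∣ p.choose (n+1) := hp.out.dvd_choose_self (by omega) (by omega)
    have h0 : ((p.choose (n+1) : ℕ) : ZMod p) = 0 :=
      (ZMod.natCast_eq_zero_iff _ _).mpr hdvd
    rw [hpas] at h0
    push_cast at h0
    rw [ih (by omega)] at h0
    have : (((p-1).choose (n+1) : ℕ) : ZMod p) = -(-1)^n := by linear_combination h0
    rw [this]
    ring

lemma B1 (hodd : Odd p) (z : ℤ) (hz : (2:ℤ)^(p-1) - 1 = p * z) :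
    ‖(∑ k ∈ Finset.Icc 1 (p-1), (2:ℚ_[p])^k / k) + 2*(z:ℚ_[p])‖ ≤ (p:ℝ)^(-1:ℤ) := by
  have hp1 : 1 ≤ p := hp.out.one_le
  have hppos : ((p:ℚ_[p])) ≠ 0 := by exact_mod_cast hp.out.ne_zero
  have hsum : ∑ k ∈ Finset.Icc 1 (p-1), (-2:ℚ_[p])^k * (p.choose k) = 2^p - 2 := by
    have hb := add_pow (-2 : ℚ_[p]) 1 p
    simp only [one_pow, mul_one] at hb
    have hsplit : ∑ k ∈ Finset.range (p+1), (-2:ℚ_[p])^k * (p.choose k)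
        = ((-2:ℚ_[p])^0 * (p.choose 0)) + ∑ k ∈ Finset.Icc 1 p, (-2:ℚ_[p])^k * (p.choose k) := by
      rw [Finset.range_eq_Ico, show Finset.Icc 1 p = Finset.Ico 1 (p+1) from rfl]
      rw [← Finset.sum_Ico_consecutive _ (by omega : 0 ≤ 1) (by omega : 1 ≤ p+1)]
      congr 1
      simp
    have htop : ∑ k ∈ Finset.Icc 1 p, (-2:ℚ_[p])^k * (p.choose k)
        = (∑ k ∈ Finset.Icc 1 (p-1), (-2:ℚ_[p])^k * (p.choose k)) + (-2:ℚ_[p])^p * 1 := by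
      have h := Finset.sum_Icc_succ_top (by omega : 1 ≤ (p-1) + 1)
        (fun k => (-2:ℚ_[p])^k * (p.choose k))
      rw [show (p-1) + 1 = p by omega] at h
      rw [h]
      simp
    have hneg1 : ((-2:ℚ_[p]) + 1)^p = -1 := by
      norm_num
      exact hodd.neg_one_pow
    have hnp : (-2:ℚ_[p])^p = -(2^p) := by
      rw [neg_pow, hodd.neg_one_pow]
      ring
    rw [hsplit, htop, hneg1] at hb
    simp only [pow_zero, Nat.choose_zero_right, Nat.cast_one, one_mul, mul_one, hnp] at hb
    linear_combination -hb
  have hps : (2:ℚ_[p])^p = 2 * 2^(p-1) := by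
    rw [← pow_succ']
    congr 1
    omega
  have h2z : (2:ℚ_[p]) * z * p = (2^p - 2) := by
    have hc : ((2:ℚ_[p])^(p-1) - 1) = p * z := by exact_mod_cast congrArg (Int.cast : ℤ → ℚ_[p]) hz
    rw [hps]
    linear_combination -2 * hc
  have key : (∑ k ∈ Finset.Icc 1 (p-1), (2:ℚ_[p])^k / k) + 2*(z:ℚ_[p])
      = ∑ k ∈ Finset.Icc 1 (p-1), ((2:ℚ_[p])^k / k + (-2:ℚ_[p])^k * (p.choose k) / p) := by
    rw [Finset.sum_add_distrib, ← Finset.sum_div, hsum, ← h2z]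
    field_simp
  rw [key]
  apply IsUltrametricDist.norm_sum_le_of_forall_le_of_nonneg (by positivity)
  intro k hk
  obtain ⟨hk1, hk2⟩ := Finset.mem_Icc.mp hk
  have hkne : (k:ℚ_[p]) ≠ 0 := by exact_mod_cast (by omega : k ≠ 0)
  have hcn : p * (p-1).choose (k-1) = p.choose k * k := by
    have := Nat.add_one_mul_choose_eq (p-1) (k-1)
    rw [show p-1+1 = p by omega, show k-1+1 = k by omega] at this
    exact this
  have hcc : ((p.choose k : ℚ_[p])) / p = ((p-1).choose (k-1) : ℚ_[p]) / k := by
    rw [div_eq_div_iff hppos hkne]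
    have h := congrArg (Nat.cast : ℕ → ℚ_[p]) hcn
    push_cast at h
    linear_combination -h
  have h2k : (2:ℚ_[p])^k = (-1)^k * (-2)^k := by
    rw [← mul_pow]; norm_num
  have hterm : (2:ℚ_[p])^k / k + (-2:ℚ_[p])^k * (p.choose k) / p
      = (-2:ℚ_[p])^k * ((((-1:ℤ))^k + ((p-1).choose (k-1) : ℤ) : ℤ) : ℚ_[p]) * ((k:ℚ_[p]))⁻¹ := by
    rw [mul_div_assoc, hcc, h2k]
    push_cast
    field_simp
  rw [hterm]
  have hw : ‖(((((-1:ℤ))^k + ((p-1).choose (k-1) : ℤ)) : ℤ) : ℚ_[p])‖ ≤ (p:ℝ)^(-1:ℤ) := by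
    have hzm : (((((-1:ℤ))^k + ((p-1).choose (k-1) : ℤ)) : ℤ) : ZMod p) = 0 := by
      push_cast
      rw [choose_zmod (k-1) (by omega)]
      have : (-1:ZMod p)^k = (-1)^((k-1)+1) := by congr 1; omega
      rw [this, pow_succ]
      ring
    have hdvd : (p:ℤ) ∣ (((-1:ℤ))^k + ((p-1).choose (k-1) : ℤ)) := by
      exact_mod_cast (ZMod.intCast_zmod_eq_zero_iff_dvd _ _).mp hzm
    have := (Padic.norm_int_le_pow_iff_dvd (p := p) (((-1:ℤ))^k + ((p-1).choose (k-1) : ℤ)) 1).mpr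
      (by simpa using hdvd)
    simpa using this
  calc ‖(-2:ℚ_[p])^k * _ * ((k:ℚ_[p]))⁻¹‖
      = ‖(-2:ℚ_[p])^k‖ * ‖(((((-1:ℤ))^k + ((p-1).choose (k-1) : ℤ)) : ℤ) : ℚ_[p])‖ * ‖((k:ℚ_[p]))⁻¹‖ := by
        rw [norm_mul, norm_mul]
    _ ≤ 1 * ((p:ℝ)^(-1:ℤ)) * 1 := by
        apply mul_le_mul
        · apply mul_le_mul _ hw (norm_nonneg _) (by norm_num)
          have : ((-2:ℚ_[p]))^k = (((-2:ℤ)^k : ℤ) : ℚ_[p]) := by push_cast; ring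
          rw [this]
          exact Padic.norm_int_le_one _
        · have hnd : ¬ p ∣ k := fun hd => absurd (Nat.le_of_dvd (by omega) hd) (by omega)
          exact le_of_eq (norm_nat_inv_eq_one_of_not_dvd (by omega) hnd)
        · positivity
        · positivity
    _ ≤ (p:ℝ)^(-1:ℤ) := by norm_num

lemma core_eq (x : ℚ_[p]) (j : ℕ) (hj1 : 1 ≤ j) :
    (1 + x)^j = 1 + (j:ℚ_[p]) * x
      + (j:ℚ_[p]) * ∑ i ∈ Finset.Icc 2 j, ((j-1).choose (i-1) : ℚ_[p]) * x^i / i := by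
  have hb := add_pow x 1 j
  simp only [one_pow, mul_one] at hb
  have hsplit : ∑ i ∈ Finset.range (j+1), x^i * (j.choose i)
      = (∑ i ∈ Finset.Ico 0 2, x^i * (j.choose i))
        + ∑ i ∈ Finset.Icc 2 j, x^i * (j.choose i) := by
    rw [Finset.range_eq_Ico, show Finset.Icc 2 j = Finset.Ico 2 (j+1) from rfl]
    rw [Finset.sum_Ico_consecutive _ (by omega : 0 ≤ 2) (by omega : 2 ≤ j+1)]
  have h01 : ∑ i ∈ Finset.Ico 0 2, x^i * (j.choose i) = 1 + (j:ℚ_[p]) * x := by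
    rw [show (2:ℕ) = 0 + 1 + 1 by rfl, Finset.sum_Ico_succ_top (by omega),
      Finset.sum_Ico_succ_top (by omega)]
    simp [mul_comm]
  have hterm : ∀ i ∈ Finset.Icc 2 j, x^i * (j.choose i)
      = (j:ℚ_[p]) * (((j-1).choose (i-1) : ℚ_[p]) * x^i / i) := by
    intro i hi
    obtain ⟨hi2, hij⟩ := Finset.mem_Icc.mp hi
    have hcn : j * (j-1).choose (i-1) = j.choose i * i := by
      have := Nat.add_one_mul_choose_eq (j-1) (i-1)
      rw [show j-1+1 = j by omega, show i-1+1 = i by omega] at this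
      exact this
    have hic : ((i:ℚ_[p])) ≠ 0 := by exact_mod_cast (by omega : i ≠ 0)
    have h := congrArg (Nat.cast : ℕ → ℚ_[p]) hcn
    push_cast at h
    field_simp
    linear_combination (-(x^i)) * h
  rw [add_comm (1:ℚ_[p]) x, hb, hsplit, h01, Finset.sum_congr rfl hterm, ← Finset.mul_sum]

lemma core_bound (hodd : Odd p) (z : ℤ) (j : ℕ) :
    ‖∑ i ∈ Finset.Icc 2 j, ((j-1).choose (i-1) : ℚ_[p]) * ((p:ℚ_[p])*z)^i / i‖
      ≤ (p:ℝ)^(-2:ℤ) := by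
  apply IsUltrametricDist.norm_sum_le_of_forall_le_of_nonneg (by positivity)
  intro i hi
  obtain ⟨hi2, hij⟩ := Finset.mem_Icc.mp hi
  have hppos : (0:ℝ) < p := by exact_mod_cast hp.out.pos
  have h1 : ‖((j-1).choose (i-1) : ℚ_[p])‖ ≤ 1 := by
    have : (((j-1).choose (i-1) : ℕ) : ℚ_[p]) = (((j-1).choose (i-1) : ℤ) : ℚ_[p]) := by push_cast; ring
    rw [this]
    exact Padic.norm_int_le_one _
  have h2 : ‖((p:ℚ_[p])*z)^i‖ ≤ (p:ℝ)^(-(i:ℤ)) := by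
    rw [norm_pow]
    have hpz : ‖(p:ℚ_[p])*z‖ ≤ (p:ℝ)⁻¹ := by
      rw [norm_mul, Padic.norm_p]
      calc (p:ℝ)⁻¹ * ‖(z:ℚ_[p])‖ ≤ (p:ℝ)⁻¹ * 1 := by
            apply mul_le_mul_of_nonneg_left (Padic.norm_int_le_one _) (by positivity)
        _ = (p:ℝ)⁻¹ := by ring
    calc ‖(p:ℚ_[p])*z‖^i ≤ ((p:ℝ)⁻¹)^i := pow_le_pow_left₀ (norm_nonneg _) hpz i
      _ = (p:ℝ)^(-(i:ℤ)) := by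
          rw [inv_pow, ← zpow_natCast, ← zpow_neg]
  have h3 : ‖((i:ℚ_[p]))⁻¹‖ ≤ (p:ℝ)^((i:ℤ)-2) := norm_nat_inv_le_self hodd hi2
  calc ‖((j-1).choose (i-1) : ℚ_[p]) * ((p:ℚ_[p])*z)^i / i‖
      = ‖((j-1).choose (i-1) : ℚ_[p])‖ * ‖((p:ℚ_[p])*z)^i‖ * ‖((i:ℚ_[p]))⁻¹‖ := by
        rw [div_eq_mul_inv, norm_mul, norm_mul]
    _ ≤ 1 * (p:ℝ)^(-(i:ℤ)) * (p:ℝ)^((i:ℤ)-2) := by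
        apply mul_le_mul _ h3 (norm_nonneg _) (by positivity)
        apply mul_le_mul h1 h2 (norm_nonneg _) (by norm_num)
    _ = (p:ℝ)^(-2:ℤ) := by
        rw [one_mul, ← zpow_add₀ (ne_of_gt hppos)]
        congr 1
        ring

lemma two_pow_pred (z : ℤ) (hz : (2:ℤ)^(p-1) - 1 = p * z) :
    (2:ℚ_[p])^(p-1) = 1 + (p:ℚ_[p])*z := by
  have hc : ((2:ℚ_[p])^(p-1) - 1) = p * z := by
    exact_mod_cast congrArg (Int.cast : ℤ → ℚ_[p]) hz
  linear_combination hc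

lemma B4 (hodd : Odd p) (z : ℤ) (hz : (2:ℤ)^(p-1) - 1 = p * z) (m : ℕ) (hm : 1 ≤ m) :
    ∃ R : ℚ_[p], ‖R‖ ≤ (p:ℝ)^(-2:ℤ) ∧
      (2:ℚ_[p])^(m*(p-1)) = 1 + (m:ℚ_[p])*((p:ℚ_[p])*(z:ℚ_[p])) + (m:ℚ_[p]) * R := by
  have hpow : (2:ℚ_[p])^(m*(p-1)) = ((2:ℚ_[p])^(p-1))^m := by
    rw [← pow_mul, Nat.mul_comm]
  refine ⟨∑ i ∈ Finset.Icc 2 m, ((m-1).choose (i-1) : ℚ_[p]) * ((p:ℚ_[p])*(z:ℚ_[p]))^i / i,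
    core_bound hodd z m, ?_⟩
  rw [hpow, two_pow_pred z hz, core_eq ((p:ℚ_[p])*(z:ℚ_[p])) m hm]

lemma B3 (hodd : Odd p) (z : ℤ) (hz : (2:ℤ)^(p-1) - 1 = p * z) (m : ℕ) :
    ‖∑ j ∈ Finset.Icc 1 m,
      (((2:ℚ_[p])^p)^j / j - (2:ℚ_[p])^j / j - (p:ℚ_[p])*(z:ℚ_[p])*2^j)‖ ≤ (p:ℝ)^(-2:ℤ) := by
  apply IsUltrametricDist.norm_sum_le_of_forall_le_of_nonneg (by positivity)
  intro j hj
  obtain ⟨hj1, hjm⟩ := Finset.mem_Icc.mp hj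
  have hp1 : 1 ≤ p := hp.out.one_le
  have hjne : ((j:ℚ_[p])) ≠ 0 := Nat.cast_ne_zero.mpr (by omega)
  have hps : (2:ℚ_[p])^p = 2 * (1 + (p:ℚ_[p])*(z:ℚ_[p])) := by
    rw [← two_pow_pred z hz, ← pow_succ']
    congr 1
    omega
  have hterm : ((2:ℚ_[p])^p)^j / j - (2:ℚ_[p])^j / j - (p:ℚ_[p])*(z:ℚ_[p])*2^j
      = (2:ℚ_[p])^j * ∑ i ∈ Finset.Icc 2 j, ((j-1).choose (i-1) : ℚ_[p]) * ((p:ℚ_[p])*(z:ℚ_[p]))^i / i := by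
    have hc := core_eq ((p:ℚ_[p])*(z:ℚ_[p])) j hj1
    rw [hps, mul_pow, hc]
    field_simp
    ring
  rw [hterm, norm_mul, norm_two_pow_eq_one hodd]
  simpa using core_bound hodd z j


lemma pnorm_mul_le {a b : ℚ_[p]} {x y : ℝ} (ha : ‖a‖ ≤ x) (hb : ‖b‖ ≤ y) : ‖a*b‖ ≤ x*y := by
  rw [norm_mul]
  exact mul_le_mul ha hb (norm_nonneg b) ((norm_nonneg a).trans ha)

lemma B2 (hodd : Odd p) (m : ℕ) :
    ‖(∑ k ∈ (Finset.Icc 1 (p*m)).filter (fun k => ¬ p ∣ k), (2:ℚ_[p])^k / k)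
      - (∑ t ∈ Finset.range m, (2:ℚ_[p])^t) * (∑ r ∈ Finset.Icc 1 (p-1), (2:ℚ_[p])^r / r)‖
      ≤ (p:ℝ)^(-1:ℤ) := by
  have hp1 : 1 ≤ p := hp.out.one_le
  have hppos : 0 < p := hp.out.pos
  have hprod : (∑ t ∈ Finset.range m, (2:ℚ_[p])^t) * (∑ r ∈ Finset.Icc 1 (p-1), (2:ℚ_[p])^r / r)
      = ∑ x ∈ (Finset.range m) ×ˢ (Finset.Icc 1 (p-1)), (2:ℚ_[p])^x.1 * ((2:ℚ_[p])^x.2 / x.2) := by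
    rw [Finset.sum_mul_sum]
    rw [Finset.sum_product]
  have hre : ∑ k ∈ (Finset.Icc 1 (p*m)).filter (fun k => ¬ p ∣ k), (2:ℚ_[p])^k / k
      = ∑ x ∈ (Finset.range m) ×ˢ (Finset.Icc 1 (p-1)), (2:ℚ_[p])^(p*x.1+x.2) / (p*x.1+x.2 : ℕ) := by
    apply Finset.sum_nbij' (i := fun k => (k / p, k % p)) (j := fun x => p * x.1 + x.2)
    · intro k hk
      obtain ⟨hk1, hnd⟩ := Finset.mem_filter.mp hk
      obtain ⟨ha, hb⟩ := Finset.mem_Icc.mp hk1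
      simp only [Finset.mem_product, Finset.mem_range, Finset.mem_Icc]
      constructor
      · rw [Nat.div_lt_iff_lt_mul hppos]
        have hcomm : p * m = m * p := Nat.mul_comm p m
        rcases Nat.lt_or_ge k (m * p) with h | h
        · exact h
        · exfalso
          have hk2 : k = p * m := by omega
          exact hnd (hk2 ▸ Dvd.intro m rfl)
      · have h1 : k % p ≠ 0 := fun h => hnd (Nat.dvd_of_mod_eq_zero h)
        have h2 : k % p < p := Nat.mod_lt _ hppos
        omega
    · intro x hx
      obtain ⟨hx1, hx2⟩ := Finset.mem_product.mp hx
      rw [Finset.mem_range] at hx1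
      obtain ⟨hr1, hr2⟩ := Finset.mem_Icc.mp hx2
      have h3 : p * x.1 + p ≤ p * m := by
        have := Nat.mul_le_mul_left p (show x.1 + 1 ≤ m from hx1)
        rwa [Nat.mul_add, Nat.mul_one] at this
      refine Finset.mem_filter.mpr ⟨Finset.mem_Icc.mpr ⟨by omega, by omega⟩, ?_⟩
      intro hd
      have : p ∣ x.2 := (Nat.dvd_add_right ⟨x.1, rfl⟩).mp hd
      have := Nat.le_of_dvd (by omega) this
      omega
    · intro k hk
      exact Nat.div_add_mod k p
    · intro x hx
      obtain ⟨hx1, hx2⟩ := Finset.mem_product.mp hx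
      obtain ⟨hr1, hr2⟩ := Finset.mem_Icc.mp hx2
      have h1 : (p * x.1 + x.2) / p = x.1 := by
        rw [Nat.mul_add_div hppos, Nat.div_eq_of_lt (by omega)]
        omega
      have h2 : (p * x.1 + x.2) % p = x.2 := by
        rw [Nat.mul_add_mod]
        exact Nat.mod_eq_of_lt (by omega)
      rw [Prod.ext_iff]
      exact ⟨h1, h2⟩
    · intro k hk
      rw [Nat.div_add_mod]
  rw [hre, hprod, ← Finset.sum_sub_distrib]
  apply IsUltrametricDist.norm_sum_le_of_forall_le_of_nonneg (by positivity)
  rintro ⟨t, r⟩ hx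
  obtain ⟨hx1, hx2⟩ := Finset.mem_product.mp hx
  rw [Finset.mem_range] at hx1
  obtain ⟨hr1, hr2⟩ := Finset.mem_Icc.mp hx2
  simp only at hx1 hr1 hr2 ⊢
  set K : ℕ := p * t + r with hK
  have hKnd : ¬ p ∣ K := by
    intro hd
    have : p ∣ r := (Nat.dvd_add_right ⟨t, rfl⟩).mp hd
    have := Nat.le_of_dvd (by omega) this
    omega
  have hKne : K ≠ 0 := by omega
  have hKcne : ((K:ℚ_[p])) ≠ 0 := Nat.cast_ne_zero.mpr hKne
  have hrne : ((r:ℚ_[p])) ≠ 0 := Nat.cast_ne_zero.mpr (by omega)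
  have hKc : (K:ℚ_[p]) = ((p*t : ℕ):ℚ_[p]) + (r:ℚ_[p]) := by rw [hK]; push_cast; ring
  have h2K : (2:ℚ_[p])^K = 2^(p*t) * 2^r := by rw [hK, pow_add]
  have hident : (2:ℚ_[p])^K / K - (2:ℚ_[p])^t * ((2:ℚ_[p])^r / r)
      = (2:ℚ_[p])^r * ((2:ℚ_[p])^(p*t) - (2:ℚ_[p])^t) * ((K:ℚ_[p]))⁻¹
        + (-((2:ℚ_[p])^t * (2:ℚ_[p])^r)) * (((p*t : ℕ):ℚ_[p])) * (((K:ℚ_[p]))⁻¹ * ((r:ℚ_[p]))⁻¹) := by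
    rw [h2K]
    rw [div_eq_mul_inv, div_eq_mul_inv]
    have hKc' : ((p*t : ℕ):ℚ_[p]) = (K:ℚ_[p]) - (r:ℚ_[p]) := by rw [hKc]; ring
    rw [hKc']
    field_simp
    ring
  rw [hident]
  have hb1 : ‖(2:ℚ_[p])^r * ((2:ℚ_[p])^(p*t) - (2:ℚ_[p])^t) * ((K:ℚ_[p]))⁻¹‖
      ≤ (p:ℝ)^(-1:ℤ) := by
    have hcast : ((2:ℚ_[p])^(p*t) - (2:ℚ_[p])^t) = (((2:ℤ)^(p*t) - 2^t : ℤ) : ℚ_[p]) := by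
      push_cast; ring
    have hdvd : ((p:ℤ))^1 ∣ ((2:ℤ)^(p*t) - 2^t : ℤ) := by
      have hzm : (((2:ℤ)^(p*t) - 2^t : ℤ) : ZMod p) = 0 := by
        push_cast
        rw [mul_comm, pow_mul, ZMod.pow_card]
        ring
      simpa using (ZMod.intCast_zmod_eq_zero_iff_dvd _ _).mp hzm
    have hmid : ‖(2:ℚ_[p])^(p*t) - (2:ℚ_[p])^t‖ ≤ (p:ℝ)^(-1:ℤ) := by
      rw [hcast]
      have := (Padic.norm_int_le_pow_iff_dvd (p := p) ((2:ℤ)^(p*t) - 2^t) 1).mpr hdvd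
      simpa using this
    calc ‖(2:ℚ_[p])^r * ((2:ℚ_[p])^(p*t) - (2:ℚ_[p])^t) * ((K:ℚ_[p]))⁻¹‖
        ≤ (1 * ((p:ℝ)^(-1:ℤ))) * 1 := by
          apply pnorm_mul_le
          · apply pnorm_mul_le (le_of_eq (norm_two_pow_eq_one hodd r)) hmid
          · exact le_of_eq (norm_nat_inv_eq_one_of_not_dvd hKne hKnd)
      _ = (p:ℝ)^(-1:ℤ) := by ring
  have hb2 : ‖(-((2:ℚ_[p])^t * (2:ℚ_[p])^r)) * (((p*t : ℕ):ℚ_[p])) * (((K:ℚ_[p]))⁻¹ * ((r:ℚ_[p]))⁻¹)‖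
      ≤ (p:ℝ)^(-1:ℤ) := by
    have hpt : ‖(((p*t : ℕ):ℚ_[p]))‖ ≤ (p:ℝ)^(-1:ℤ) := by
      have hc : (((p*t : ℕ)):ℚ_[p]) = (((p*t : ℤ)):ℚ_[p]) := by push_cast; ring
      rw [hc]
      have := (Padic.norm_int_le_pow_iff_dvd (p := p) ((p*t : ℤ)) 1).mpr
        (by simpa using Dvd.intro (t:ℤ) rfl)
      simpa using this
    have hrinv : ‖((r:ℚ_[p]))⁻¹‖ = 1 :=
      norm_nat_inv_eq_one_of_not_dvd (by omega) (fun hd => by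
        have := Nat.le_of_dvd (by omega) hd; omega)
    have hneg : ‖(-((2:ℚ_[p])^t * (2:ℚ_[p])^r))‖ ≤ 1 := by
      rw [norm_neg, ← pow_add]
      exact le_of_eq (norm_two_pow_eq_one hodd (t+r))
    calc ‖(-((2:ℚ_[p])^t * (2:ℚ_[p])^r)) * (((p*t : ℕ):ℚ_[p])) * (((K:ℚ_[p]))⁻¹ * ((r:ℚ_[p]))⁻¹)‖
        ≤ (1 * ((p:ℝ)^(-1:ℤ))) * (1 * 1) := by
          apply pnorm_mul_le
          · exact pnorm_mul_le hneg hpt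
          · exact pnorm_mul_le (le_of_eq (norm_nat_inv_eq_one_of_not_dvd hKne hKnd))
              (le_of_eq hrinv)
      _ = (p:ℝ)^(-1:ℤ) := by ring
  calc ‖_ + _‖ ≤ max _ _ := Padic.nonarchimedean _ _
    _ ≤ (p:ℝ)^(-1:ℤ) := max_le hb1 hb2

lemma norm_G_le_one (hodd : Odd p) (m : ℕ) : ‖∑ t ∈ Finset.range m, (2:ℚ_[p])^t‖ ≤ 1 := by
  apply IsUltrametricDist.norm_sum_le_of_forall_le_of_nonneg (by norm_num)
  intro t _
  exact le_of_eq (norm_two_pow_eq_one hodd t)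

lemma assemble {K : Type*} [Field K] (P M tw W A U Tm x : K)
    (hP : P ≠ 0) (h2 : tw ≠ 0) (hW : W ≠ 0) :
    P * M / (tw * W) * (A + U / P) - M / tw * Tm - -x * (M / tw * Tm)
      = M * tw⁻¹ * W⁻¹ * (P * A + U - W * (1 - x) * Tm) := by
  rw [div_eq_mul_inv, div_eq_mul_inv, div_eq_mul_inv, mul_inv]
  have e1 : P * P⁻¹ = 1 := mul_inv_cancel₀ hP
  have e3 : W * W⁻¹ = 1 := mul_inv_cancel₀ hW
  linear_combination (M * tw⁻¹ * W⁻¹ * U) * e1 + (M * tw⁻¹ * Tm * (1 - x)) * e3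

lemma f_cast (N : ℕ) (hN : 1 ≤ N) :
    ((f (N - 1) : ℚ) : ℚ_[p]) = (N:ℚ_[p]) / 2^N * ∑ k ∈ Finset.Icc 1 N, (2:ℚ_[p])^k / k := by
  have h := f_formula (N-1)
  rw [show (N-1)+1 = N by omega] at h
  rw [h, T]
  have hc : ((N-1 : ℕ) : ℚ) = (N:ℚ) - 1 := by
    push_cast [Nat.cast_sub hN]
    ring
  rw [hc]
  push_cast
  rw [show ((N:ℚ_[p]) - 1 + 1) = (N:ℚ_[p]) by ring]

lemma key_bound (hodd : Odd p) (e c : ℕ) (he : 1 ≤ e) (hc1 : 1 ≤ c) (hc2 : c ≤ p - 1) :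
    ‖(((f (c * p ^ e - 1) - f (c * p ^ (e - 1) - 1)) -
        (c : ℚ) * (1 - 2 ^ (p - 1)) * (p : ℚ) ^ (e - 1) * f (c * p ^ (e - 1) - 1) : ℚ) : ℚ_[p])‖
      ≤ (p:ℝ)^(-((e:ℤ)+1)) := by
  have hp1 : 1 ≤ p := hp.out.one_le
  have hp3 : 3 ≤ p := three_le_p hodd
  have hppos : (0:ℝ) < (p:ℝ) := by exact_mod_cast hp.out.pos
  have hpR : (p:ℝ) ≠ 0 := ne_of_gt hppos
  have hp1R : (1:ℝ) ≤ (p:ℝ) := by exact_mod_cast hp1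
  set m : ℕ := c * p^(e-1) with hm
  have hm1 : 1 ≤ m := Nat.one_le_iff_ne_zero.mpr (by positivity)
  have hpe : p^e = p^(e-1) * p := by
    rw [← pow_succ]
    congr 1
    omega
  have hpm : c * p^e = p * m := by
    rw [hm, hpe]
    ring
  have hmlt : m < p^e := by
    have h1 : c * p^(e-1) ≤ (p-1) * p^(e-1) := Nat.mul_le_mul_right _ hc2
    have h2 : (p-1) * p^(e-1) < p * p^(e-1) :=
      (Nat.mul_lt_mul_right (Nat.pow_pos hp.out.pos)).mpr (by omega)
    have h3 : p * p^(e-1) = p^e := by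
      rw [hpe]; ring
    omega
  -- Fermat quotient
  obtain ⟨z, hz⟩ : ∃ z : ℤ, (2:ℤ)^(p-1) - 1 = p * z := by
    have h2ne : (2 : ZMod p) ≠ 0 := by
      intro h
      have : (p:ℤ) ∣ 2 := by
        exact_mod_cast (ZMod.natCast_eq_zero_iff 2 p).mp (by exact_mod_cast h)
      have := Int.le_of_dvd (by norm_num) this
      omega
    have hf : (2 : ZMod p)^(p-1) = 1 := ZMod.pow_card_sub_one_eq_one h2ne
    have : (((2:ℤ)^(p-1) - 1 : ℤ) : ZMod p) = 0 := by push_cast [hf]; ring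
    obtain ⟨z, hz⟩ := (ZMod.intCast_zmod_eq_zero_iff_dvd _ _).mp this
    exact ⟨z, by exact_mod_cast hz⟩
  -- abbreviations
  set S : ℚ_[p] := ∑ r ∈ Finset.Icc 1 (p-1), (2:ℚ_[p])^r / r with hS_def
  set G : ℚ_[p] := ∑ t ∈ Finset.range m, (2:ℚ_[p])^t with hG_def
  set Tm : ℚ_[p] := ∑ k ∈ Finset.Icc 1 m, (2:ℚ_[p])^k / k with hTm_def
  set TM : ℚ_[p] := ∑ k ∈ Finset.Icc 1 (p*m), (2:ℚ_[p])^k / k with hTM_def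
  set A : ℚ_[p] := ∑ k ∈ (Finset.Icc 1 (p*m)).filter (fun k => ¬ p ∣ k), (2:ℚ_[p])^k / k with hA_def
  set U : ℚ_[p] := ∑ j ∈ Finset.Icc 1 m, ((2:ℚ_[p])^p)^j / j with hU_def
  set w : ℚ_[p] := (2:ℚ_[p])^(m*(p-1)) with hw_def
  set x : ℚ_[p] := (c:ℚ_[p]) * (z:ℚ_[p]) * (p:ℚ_[p])^e with hx_def
  set Y : ℚ_[p] := ((p:ℚ_[p])*A + U) - w*(1 - x)*Tm with hY_def
  have hpne : ((p:ℚ_[p])) ≠ 0 := Nat.cast_ne_zero.mpr (by omega)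
  have h2ne : ((2:ℚ_[p])) ≠ 0 := by
    intro h
    have := norm_two_eq_one (p := p) hodd
    rw [h] at this
    simp at this
  -- cast formulas
  have hcast2 : ((f (m - 1) : ℚ) : ℚ_[p]) = (m:ℚ_[p]) / 2^m * Tm := by
    rw [hTm_def]
    exact f_cast m hm1
  have hcast1 : ((f (p*m - 1) : ℚ) : ℚ_[p]) = ((p*m : ℕ):ℚ_[p]) / 2^(p*m) * TM := by
    rw [hTM_def]
    exact f_cast (p*m) (Nat.one_le_iff_ne_zero.mpr (by positivity))
  have hsplit : TM = A + U / p := by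
    have h1 : TM = (∑ k ∈ (Finset.Icc 1 (p*m)).filter (fun k => p ∣ k), (2:ℚ_[p])^k/k) + A := by
      rw [hTM_def, hA_def]
      exact (Finset.sum_filter_add_sum_filter_not _ _ _).symm
    have h2 : ∑ k ∈ (Finset.Icc 1 (p*m)).filter (fun k => p ∣ k), (2:ℚ_[p])^k/k = U / p := by
      rw [hU_def, Finset.sum_div]
      apply Finset.sum_nbij' (i := fun k => k / p) (j := fun j => p * j)
      · intro k hk
        obtain ⟨hk1, hd⟩ := Finset.mem_filter.mp hk
        obtain ⟨ha, hb⟩ := Finset.mem_Icc.mp hk1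
        refine Finset.mem_Icc.mpr ⟨?_, ?_⟩
        · rw [Nat.one_le_div_iff hp.out.pos]
          exact Nat.le_of_dvd (by omega) hd
        · calc k / p ≤ (p*m)/p := Nat.div_le_div_right hb
            _ = m := Nat.mul_div_cancel_left m hp.out.pos
      · intro j hj
        obtain ⟨hj1, hj2⟩ := Finset.mem_Icc.mp hj
        refine Finset.mem_filter.mpr ⟨Finset.mem_Icc.mpr ⟨?_, ?_⟩, ⟨j, rfl⟩⟩
        · have h1 := hp.out.pos
          exact Nat.one_le_iff_ne_zero.mpr (by positivity)
        · exact Nat.mul_le_mul_left p hj2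
      · intro k hk
        exact Nat.mul_div_cancel' (Finset.mem_filter.mp hk).2
      · intro j hj
        exact Nat.mul_div_cancel_left j hp.out.pos
      · intro k hk
        obtain ⟨hk1, hd⟩ := Finset.mem_filter.mp hk
        obtain ⟨ha, hb⟩ := Finset.mem_Icc.mp hk1
        obtain ⟨j, rfl⟩ := hd
        have hj1 : 1 ≤ j := by
          rcases Nat.eq_zero_or_pos j with rfl | h
          · simp at ha
          · omega
        rw [Nat.mul_div_cancel_left j hp.out.pos, ← pow_mul]
        have hjne : ((j:ℚ_[p])) ≠ 0 := Nat.cast_ne_zero.mpr (by omega)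
        push_cast
        field_simp
    rw [h1, h2]
    ring
  have hcoeff : (c:ℚ_[p]) * (1 - 2 ^ (p - 1)) * (p:ℚ_[p]) ^ (e - 1) = -x := by
    rw [two_pow_pred z hz, hx_def]
    rw [show ((p:ℚ_[p]))^e = (p:ℚ_[p])^(e-1) * p by
      rw [← pow_succ]; congr 1; omega]
    ring
  have h2pm : (2:ℚ_[p])^(p*m) = 2^m * w := by
    rw [hw_def, ← pow_add]
    congr 1
    have h1 : m * p = m * 1 + m * (p-1) := by
      rw [← Nat.mul_add]
      congr 1
      omega
    have h2 : p * m = m * p := Nat.mul_comm _ _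
    omega
  have hwne : w ≠ 0 := pow_ne_zero _ h2ne
  have hDeq : (((f (c * p ^ e - 1) - f (m - 1)) -
        (c : ℚ) * (1 - 2 ^ (p - 1)) * (p : ℚ) ^ (e - 1) * f (m - 1) : ℚ) : ℚ_[p])
      = (m:ℚ_[p]) * ((2:ℚ_[p])^m)⁻¹ * w⁻¹ * Y := by
    have hpow2ne : ((2:ℚ_[p]))^m ≠ 0 := pow_ne_zero _ h2ne
    have hpmc : ((p*m : ℕ):ℚ_[p]) = (p:ℚ_[p]) * (m:ℚ_[p]) := by push_cast; ring
    push_cast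
    rw [hpm, hcast1, hcast2, hsplit, h2pm, hY_def, hpmc]
    rw [show ((c:ℚ_[p]) * (1 - 2 ^ (p - 1)) * (p:ℚ_[p]) ^ (e - 1)) = -x from hcoeff]
    exact assemble _ _ _ _ _ _ _ _ hpne hpow2ne hwne
  -- norm facts
  have hnm : ‖(m:ℚ_[p])‖ ≤ (p:ℝ)^(-((e:ℤ)-1)) := by
    have hdvd : ((p:ℤ))^(e-1) ∣ (m:ℤ) := ⟨c, by push_cast [hm]; ring⟩
    have := (Padic.norm_int_le_pow_iff_dvd (p := p) (m:ℤ) (e-1)).mpr hdvd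
    have hcast : ((m:ℤ):ℚ_[p]) = (m:ℚ_[p]) := by push_cast; ring
    rw [hcast] at this
    refine this.trans (le_of_eq ?_)
    congr 1
    push_cast [Nat.cast_sub he]
    ring
  have hnTm : ‖Tm‖ ≤ (p:ℝ)^((e:ℤ)-1) := by
    rw [hTm_def]
    apply IsUltrametricDist.norm_sum_le_of_forall_le_of_nonneg (by positivity)
    intro k hk
    obtain ⟨hk1, hk2⟩ := Finset.mem_Icc.mp hk
    rw [div_eq_mul_inv, norm_mul, norm_two_pow_eq_one hodd, one_mul]
    exact norm_nat_inv_le_of_lt_pow (by omega) (by omega)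
  have hnp : ‖(p:ℚ_[p])‖ = (p:ℝ)^(-1:ℤ) := by
    rw [Padic.norm_p, zpow_neg_one]
  have hnpe : ‖(p:ℚ_[p])^e‖ = (p:ℝ)^(-(e:ℤ)) := by
    rw [norm_pow, hnp, ← zpow_natCast ((p:ℝ)^(-1:ℤ)), ← zpow_mul]
    congr 1
    ring
  have hnz : ‖(z:ℚ_[p])‖ ≤ 1 := Padic.norm_int_le_one z
  have hnc : ‖(c:ℚ_[p])‖ ≤ 1 := by
    have : ((c:ℤ):ℚ_[p]) = (c:ℚ_[p]) := by push_cast; ring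
    rw [← this]
    exact Padic.norm_int_le_one c
  have hnx : ‖x‖ ≤ (p:ℝ)^(-(e:ℤ)) := by
    rw [hx_def]
    calc ‖(c:ℚ_[p]) * (z:ℚ_[p]) * (p:ℚ_[p])^e‖ ≤ (1*1) * (p:ℝ)^(-(e:ℤ)) :=
          pnorm_mul_le (pnorm_mul_le hnc hnz) (le_of_eq hnpe)
      _ = (p:ℝ)^(-(e:ℤ)) := by ring
  have hnx1 : ‖x‖ ≤ 1 := hnx.trans (by
    calc (p:ℝ)^(-(e:ℤ)) ≤ (p:ℝ)^(0:ℤ) := zpow_le_zpow_right₀ hp1R (by omega)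
      _ = 1 := zpow_zero _)
  have h1mx : ‖1 - x‖ ≤ 1 := by
    rw [sub_eq_add_neg]
    refine (Padic.nonarchimedean _ _).trans (max_le (by norm_num) (by rwa [norm_neg]))
  -- w ≈ 1 + x
  obtain ⟨R, hR, hwR⟩ := B4 hodd z hz m hm1
  have hmx : (m:ℚ_[p]) * ((p:ℚ_[p])*(z:ℚ_[p])) = x := by
    rw [hx_def, hm]
    push_cast
    rw [show ((p:ℚ_[p]))^e = (p:ℚ_[p])^(e-1) * p by
      rw [← pow_succ]; congr 1; omega]
    ring
  have hwx : ‖w - (1 + x)‖ ≤ (p:ℝ)^(-((e:ℤ)+1)) := by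
    have : w - (1 + x) = (m:ℚ_[p]) * R := by
      rw [hw_def, hwR, hmx]
      ring
    rw [this]
    calc ‖(m:ℚ_[p]) * R‖ ≤ (p:ℝ)^(-((e:ℤ)-1)) * (p:ℝ)^(-2:ℤ) := pnorm_mul_le hnm hR
      _ = (p:ℝ)^(-((e:ℤ)+1)) := by
          rw [← zpow_add₀ hpR]
          congr 1
          ring
  have h1w : ‖1 - w*(1-x)‖ ≤ (p:ℝ)^(-((e:ℤ)+1)) := by
    have hid : 1 - w*(1-x) = ((1+x) - w)*(1-x) + x*x := by ring
    rw [hid]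
    refine (Padic.nonarchimedean _ _).trans (max_le ?_ ?_)
    · calc ‖((1+x) - w)*(1-x)‖ ≤ (p:ℝ)^(-((e:ℤ)+1)) * 1 := by
            apply pnorm_mul_le _ h1mx
            rw [← norm_neg]
            simpa [neg_sub] using hwx
        _ = (p:ℝ)^(-((e:ℤ)+1)) := by ring
    · calc ‖x*x‖ ≤ (p:ℝ)^(-(e:ℤ)) * (p:ℝ)^(-(e:ℤ)) := pnorm_mul_le hnx hnx
        _ = (p:ℝ)^(-((e:ℤ)+(e:ℤ))) := by rw [← zpow_add₀ hpR]; congr 1 <;> ring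
        _ ≤ (p:ℝ)^(-((e:ℤ)+1)) := zpow_le_zpow_right₀ hp1R (by omega)
  have hwTm : ‖(1 - w*(1-x))*Tm‖ ≤ (p:ℝ)^(-2:ℤ) := by
    calc ‖(1 - w*(1-x))*Tm‖ ≤ (p:ℝ)^(-((e:ℤ)+1)) * (p:ℝ)^((e:ℤ)-1) := pnorm_mul_le h1w hnTm
      _ = (p:ℝ)^(-2:ℤ) := by rw [← zpow_add₀ hpR]; congr 1 <;> ring
  -- B3 rearranged
  have hG2 : (∑ j ∈ Finset.Icc 1 m, (2:ℚ_[p])^j) = 2 * G := by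
    rw [hG_def, show Finset.Icc 1 m = Finset.Ico 1 (m+1) from rfl, Finset.sum_Ico_eq_sum_range,
      Finset.mul_sum, Nat.add_sub_cancel]
    exact Finset.sum_congr rfl fun t _ => by ring
  have hYb3 : ‖U - Tm - (p:ℚ_[p])*(z:ℚ_[p])*(2*G)‖ ≤ (p:ℝ)^(-2:ℤ) := by
    have hrw : U - Tm - (p:ℚ_[p])*(z:ℚ_[p])*(2*G)
        = ∑ j ∈ Finset.Icc 1 m,
            (((2:ℚ_[p])^p)^j / j - (2:ℚ_[p])^j / j - (p:ℚ_[p])*(z:ℚ_[p])*2^j) := by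
      rw [Finset.sum_sub_distrib, Finset.sum_sub_distrib, ← Finset.mul_sum, hG2]
    rw [hrw]
    exact B3 hodd z hz m
  have hYb2 : ‖A - G*S‖ ≤ (p:ℝ)^(-1:ℤ) := B2 hodd m
  have hSz : ‖S + 2*(z:ℚ_[p])‖ ≤ (p:ℝ)^(-1:ℤ) := B1 hodd z hz
  have hnG : ‖G‖ ≤ 1 := norm_G_le_one hodd m
  have hY : ‖Y‖ ≤ (p:ℝ)^(-2:ℤ) := by
    have hid : Y = (U - Tm - (p:ℚ_[p])*(z:ℚ_[p])*(2*G))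
        + ((p:ℚ_[p])*(A - G*S) + (((p:ℚ_[p])*G)*(S + 2*(z:ℚ_[p])) + (1 - w*(1-x))*Tm)) := by
      rw [hY_def]
      ring
    rw [hid]
    refine (Padic.nonarchimedean _ _).trans (max_le hYb3 ?_)
    refine (Padic.nonarchimedean _ _).trans (max_le ?_ ?_)
    · calc ‖(p:ℚ_[p])*(A - G*S)‖ ≤ (p:ℝ)^(-1:ℤ) * (p:ℝ)^(-1:ℤ) :=
            pnorm_mul_le (le_of_eq hnp) hYb2
        _ = (p:ℝ)^(-2:ℤ) := by rw [← zpow_add₀ hpR]; norm_num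
    refine (Padic.nonarchimedean _ _).trans (max_le ?_ hwTm)
    calc ‖((p:ℚ_[p])*G)*(S + 2*(z:ℚ_[p]))‖ ≤ ((p:ℝ)^(-1:ℤ) * 1) * (p:ℝ)^(-1:ℤ) :=
          pnorm_mul_le (pnorm_mul_le (le_of_eq hnp) hnG) hSz
      _ = (p:ℝ)^(-2:ℤ) := by rw [mul_one, ← zpow_add₀ hpR]; norm_num
  -- final
  rw [hDeq]
  have hn2m : ‖((2:ℚ_[p])^m)⁻¹‖ = 1 := by rw [norm_inv, norm_two_pow_eq_one hodd]; norm_num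
  have hnw : ‖w⁻¹‖ = 1 := by rw [norm_inv, hw_def, norm_two_pow_eq_one hodd]; norm_num
  calc ‖(m:ℚ_[p]) * ((2:ℚ_[p])^m)⁻¹ * w⁻¹ * Y‖
      ≤ (((p:ℝ)^(-((e:ℤ)-1)) * 1) * 1) * (p:ℝ)^(-2:ℤ) := by
        apply pnorm_mul_le _ hY
        apply pnorm_mul_le _ (le_of_eq hnw)
        exact pnorm_mul_le hnm (le_of_eq hn2m)
    _ = (p:ℝ)^(-((e:ℤ)+1)) := by
        rw [mul_one, mul_one, ← zpow_add₀ hpR]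
        congr 1
        ring

end Padic

theorem stmt_13 (p : ℕ) (hp : p.Prime) (hodd : Odd p) (e : ℕ) (he : 1 ≤ e)
    (c : ℕ) (hc1 : 1 ≤ c) (hc2 : c ≤ p - 1) :
    (f (c * p ^ e - 1) - f (c * p ^ (e - 1) - 1)) -
        (c : ℚ) * (1 - 2 ^ (p - 1)) * (p : ℚ) ^ (e - 1) * f (c * p ^ (e - 1) - 1) = 0 ∨
    (e : ℤ) + 1 ≤ padicValRat p
      ((f (c * p ^ e - 1) - f (c * p ^ (e - 1) - 1)) -
        (c : ℚ) * (1 - 2 ^ (p - 1)) * (p : ℚ) ^ (e - 1) * f (c * p ^ (e - 1) - 1)) := by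
  haveI hfp : Fact p.Prime := ⟨hp⟩
  set D : ℚ := (f (c * p ^ e - 1) - f (c * p ^ (e - 1) - 1)) -
        (c : ℚ) * (1 - 2 ^ (p - 1)) * (p : ℚ) ^ (e - 1) * f (c * p ^ (e - 1) - 1) with hD
  rcases eq_or_ne D 0 with h0 | h0
  · exact Or.inl h0
  right
  have key : ‖((D : ℚ) : ℚ_[p])‖ ≤ (p:ℝ)^(-((e:ℤ)+1)) := by
    rw [hD]
    exact key_bound hodd e c he hc1 hc2
  have hDc : ((D : ℚ) : ℚ_[p]) ≠ 0 := by
    exact_mod_cast Rat.cast_ne_zero.mpr h0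
  rw [Padic.norm_eq_zpow_neg_valuation hDc, Padic.valuation_ratCast] at key
  have hplt : (1:ℝ) < (p:ℝ) := by exact_mod_cast hp.one_lt
  have := (zpow_le_zpow_iff_right₀ hplt).mp key
  omega
end

section
/- For every odd prime p, the sequence (f(p^e - 1))_{e ≥ 0} is a Cauchy sequence in ℚ_p, and its limit is congruent to 1 modulo p (i.e., each f(p^e - 1) satisfies ν_p(f(p^e-1) - 1) ≥ 1). -/
lemma inv_choose_add (n k : ℕ) (hk : k ≤ n) :
    (((n+1).choose k : ℚ))⁻¹ + (((n+1).choose (k+1) : ℚ))⁻¹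
      = ((n:ℚ)+2)/((n:ℚ)+1) * ((n.choose k : ℚ))⁻¹ := by
  have h0 : (n.choose k : ℚ) ≠ 0 := Nat.cast_ne_zero.mpr (Nat.choose_pos hk).ne'
  have h1 : (((n+1).choose k : ℚ)) ≠ 0 :=
    Nat.cast_ne_zero.mpr (Nat.choose_pos (by omega)).ne'
  have h2 : (((n+1).choose (k+1) : ℚ)) ≠ 0 :=
    Nat.cast_ne_zero.mpr (Nat.choose_pos (by omega)).ne'
  have e1 : (((n+1).choose (k+1) : ℚ)) * ((k:ℚ)+1) = ((n:ℚ)+1) * (n.choose k : ℚ) := by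
    exact_mod_cast congrArg (Nat.cast (R := ℚ)) (Nat.add_one_mul_choose_eq n k).symm
  have e2 : (((n+1).choose k : ℚ)) * (((n:ℚ)+1) - k) = (n.choose k : ℚ) * ((n:ℚ)+1) := by
    have h := Nat.choose_mul_succ_eq n k
    have hc : ((n + 1 - k : ℕ) : ℚ) = ((n:ℚ)+1) - k := by
      push_cast [Nat.cast_sub (by omega : k ≤ n + 1)]; ring
    calc (((n+1).choose k : ℚ)) * (((n:ℚ)+1) - k)
        = (((n+1).choose k : ℚ)) * ((n + 1 - k : ℕ) : ℚ) := by rw [hc]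
      _ = (n.choose k : ℚ) * ((n:ℚ)+1) := by exact_mod_cast congrArg (Nat.cast (R := ℚ)) h.symm
  have hn1 : ((n:ℚ)+1) ≠ 0 := by positivity
  have hk1 : ((k:ℚ)+1) ≠ 0 := by positivity
  have E1 : (((n+1).choose (k+1) : ℚ))⁻¹ = ((k:ℚ)+1)/(((n:ℚ)+1) * (n.choose k : ℚ)) := by
    field_simp
    linear_combination -e1
  have E2 : (((n+1).choose k : ℚ))⁻¹ = (((n:ℚ)+1) - k)/(((n:ℚ)+1) * (n.choose k : ℚ)) := by
    have hnk : ((n:ℚ)+1) - k ≠ 0 := by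
      have : (k:ℚ) ≤ n := by exact_mod_cast hk
      intro h; nlinarith
    field_simp
    linear_combination -e2
  rw [E1, E2, ← add_div]
  field_simp
  ring

lemma f_succ (n : ℕ) : f (n+1) = 1 + ((n:ℚ)+2)/(2*((n:ℚ)+1)) * f n := by
  have key : ∑ k ∈ Finset.range (n+1),
      ((((n+1).choose k : ℚ))⁻¹ + (((n+1).choose (k+1) : ℚ))⁻¹)
      = ((n:ℚ)+2)/((n:ℚ)+1) * f n := by
    rw [f, Finset.mul_sum]
    exact Finset.sum_congr rfl fun k hk =>
      inv_choose_add n k (by simpa using Nat.lt_succ_iff.mp (Finset.mem_range.mp hk))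
  have s1 : ∑ k ∈ Finset.range (n+1), (((n+1).choose k : ℚ))⁻¹ = f (n+1) - 1 := by
    have := Finset.sum_range_succ (fun k => (((n+1).choose k : ℚ))⁻¹) (n+1)
    rw [f] at *
    simp only [Nat.choose_self] at this
    rw [this]; push_cast; ring
  have s2 : ∑ k ∈ Finset.range (n+1), (((n+1).choose (k+1) : ℚ))⁻¹ = f (n+1) - 1 := by
    have := Finset.sum_range_succ' (fun k => (((n+1).choose k : ℚ))⁻¹) (n+1)
    rw [f] at *
    simp only [Nat.choose_zero_right] at this
    rw [this]; push_cast; ring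
  rw [Finset.sum_add_distrib, s1, s2] at key
  have hn1 : ((n:ℚ)+1) ≠ 0 := by positivity
  field_simp at key ⊢
  linarith [key]

lemma f_eq (n : ℕ) :
    f n = ∑ j ∈ Finset.range (n+1), ((n:ℚ)+1)/((((n:ℚ)+1) - j) * 2^j) := by
  induction n with
  | zero => simp [f]
  | succ n ih =>
    rw [f_succ, ih]
    push_cast
    rw [Finset.sum_range_succ' (fun j => ((n:ℚ)+1+1)/((((n:ℚ)+1+1) - j) * 2^j)) (n+1)]
    have term0 : ((n:ℚ)+1+1)/((((n:ℚ)+1+1) - 0) * 2^(0:ℕ)) = 1 := by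
      have : ((n:ℚ)+1+1) ≠ 0 := by positivity
      simp [this]
    rw [Finset.mul_sum]
    have hterm : ∀ i ∈ Finset.range (n+1),
        ((n:ℚ)+1+1)/((((n:ℚ)+1+1) - (↑(i+1))) * 2^(i+1))
        = ((n:ℚ)+2)/(2*((n:ℚ)+1)) * (((n:ℚ)+1)/((((n:ℚ)+1) - i) * 2^i)) := by
      intro i hi
      have hi' : (i:ℚ) < (n:ℚ)+1 := by
        have := Finset.mem_range.mp hi; exact_mod_cast this
      have h1 : (((n:ℚ)+1) - i) ≠ 0 := by intro h; nlinarith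
      have h2 : ((n:ℚ)+1) ≠ 0 := by positivity
      have h3 : (2:ℚ)^i ≠ 0 := by positivity
      push_cast
      have e : (n:ℚ)+1+1-((i:ℚ)+1) = (n:ℚ)+1-i := by ring
      rw [e, pow_succ]
      field_simp
      ring
    rw [Finset.sum_congr rfl hterm]
    have h2 : ((n:ℚ)+1+1) ≠ 0 := by positivity
    push_cast
    rw [pow_zero, sub_zero, mul_one, div_self h2]
    ring

section helpers
variable {p : ℕ} [hp : Fact p.Prime]

lemma padic_nonarch_sum {ι : Type*} (s : Finset ι) (g : ι → ℚ_[p]) {C : ℝ} (hC : 0 ≤ C)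
    (h : ∀ i ∈ s, ‖g i‖ ≤ C) : ‖∑ i ∈ s, g i‖ ≤ C := by
  classical
  induction s using Finset.induction_on with
  | empty => simpa using hC
  | @insert a s ha ih =>
    rw [Finset.sum_insert ha]
    exact le_trans (Padic.nonarchimedean _ _)
      (max_le (h _ (Finset.mem_insert_self _ _))
        (ih fun i hi => h i (Finset.mem_insert_of_mem hi)))

lemma norm_int_unit {m : ℤ} (h : ¬ (p:ℤ) ∣ m) : ‖(m : ℚ_[p])‖ = 1 :=
  le_antisymm (Padic.norm_int_le_one m)
    (not_lt.mp fun hlt => h (Padic.norm_intCast_lt_one_iff.mp hlt))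

lemma p_not_dvd_two (h2 : p ≠ 2) : ¬ (p:ℤ) ∣ 2 := by
  intro hd
  have := Int.le_of_dvd (by norm_num) hd
  have hge := hp.out.two_le
  omega

lemma norm_two_pow (h2 : p ≠ 2) (k : ℕ) : ‖(2 : ℚ_[p]) ^ k‖ = 1 := by
  rw [norm_pow]
  have : ‖(2 : ℚ_[p])‖ = 1 := by
    have := norm_int_unit (p := p) (m := 2) (p_not_dvd_two h2)
    simpa using this
  rw [this, one_pow]

lemma fermat_dvd (h2 : p ≠ 2) : (p:ℤ) ∣ 2 ^ (p - 1) - 1 := by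
  have hzero : (2 : ZMod p) ≠ 0 := by
    intro h
    have : ((2:ℕ) : ZMod p) = 0 := by exact_mod_cast h
    have hd := (ZMod.natCast_eq_zero_iff 2 p).mp this
    have := Nat.le_of_dvd (by norm_num) hd
    have hge := hp.out.two_le
    omega
  have hf := ZMod.pow_card_sub_one_eq_one hzero
  have : ((2 ^ (p - 1) - 1 : ℤ) : ZMod p) = 0 := by push_cast [hf]; ring
  exact (ZMod.intCast_zmod_eq_zero_iff_dvd _ p).mp this

/-- structure of `p^e - j` for `0 < j < p^e`. -/
lemma struct_lemma (h2 : p ≠ 2) (e j : ℕ) (h0 : 0 < j) (h1 : j < p ^ e) :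
    ∃ t : ℕ, t < e ∧ ‖(((p:ℤ) ^ e - j : ℤ) : ℚ_[p])‖ = (p:ℝ) ^ (-(t:ℤ)) ∧
      (p:ℤ) ^ (t + 1) ∣ 2 ^ ((p - 1) * j) - 1 := by
  have hp1 : 1 < p := hp.out.one_lt
  set t := padicValNat p j with ht
  obtain ⟨u, hu⟩ := pow_padicValNat_dvd (p := p) (n := j)
  have hpu : ¬ p ∣ u := by
    intro hd
    have hj' : p ^ (t + 1) ∣ j :=
      ⟨u / p, by rw [hu, pow_succ, mul_assoc, Nat.mul_div_cancel' hd]⟩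
    exact pow_succ_padicValNat_not_dvd (p := p) h0.ne' hj'
  have hte : t < e := by
    have hle : p ^ t ≤ j := Nat.le_of_dvd h0 pow_padicValNat_dvd
    exact (Nat.pow_lt_pow_iff_right hp1).mp (lt_of_le_of_lt hle h1)
  refine ⟨t, hte, ?_, ?_⟩
  · -- norm computation
    have he : (p:ℤ) ^ e = (p:ℤ) ^ t * (p:ℤ) ^ (e - t) := by
      rw [← pow_add]; congr 1; omega
    have keq : ((p:ℤ) ^ e - j) = (p:ℤ) ^ t * ((p:ℤ) ^ (e - t) - u) := by
      rw [he, hu]; push_cast; ring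
    have hm : ¬ (p:ℤ) ∣ ((p:ℤ) ^ (e - t) - u) := by
      intro hd
      have hpp : (p:ℤ) ∣ (p:ℤ) ^ (e - t) := dvd_pow_self _ (by omega)
      have : (p:ℤ) ∣ (u:ℤ) := by
        have := dvd_sub hpp hd
        simpa using this
      exact hpu (by exact_mod_cast this)
    rw [keq]
    push_cast
    rw [norm_mul, Padic.norm_p_pow]
    have : ‖((p:ℚ_[p]) ^ (e - t) - u)‖ = 1 := by
      have := norm_int_unit (p := p) hm
      push_cast at this
      exact this
    rw [this, mul_one]
  · -- divisibility
    have hFermat := fermat_dvd (p := p) h2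
    have hdvd1 : ((2:ℤ) ^ (p - 1) - 1) ∣ (2:ℤ) ^ ((p - 1) * u) - 1 := by
      have := sub_dvd_pow_sub_pow ((2:ℤ) ^ (p - 1)) 1 u
      simpa [← pow_mul] using this
    have hA : (p:ℤ) ∣ (2:ℤ) ^ ((p - 1) * u) - 1 := hFermat.trans hdvd1
    have := dvd_sub_pow_of_dvd_sub hA t
    have heq : ((2:ℤ) ^ ((p - 1) * u)) ^ (p ^ t) = 2 ^ ((p - 1) * j) := by
      rw [← pow_mul, hu, ← ht]; ring_nf
    rw [heq, one_pow] at this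
    exact_mod_cast this

end helpers

section main
variable {p : ℕ} [hp : Fact p.Prime]

lemma fpow_cast (hp1 : 0 < p) (m : ℕ) :
    ((f (p ^ m - 1) : ℚ) : ℚ_[p]) =
      ∑ j ∈ Finset.range (p ^ m), (p:ℚ_[p]) ^ m / (((p:ℚ_[p]) ^ m - j) * 2 ^ j) := by
  have hP : 0 < p ^ m := pow_pos hp1 m
  have h1 : p ^ m - 1 + 1 = p ^ m := Nat.succ_pred_eq_of_pos hP
  have h2 : ((p ^ m - 1 : ℕ) : ℚ) + 1 = ((p:ℚ)) ^ m := by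
    push_cast [Nat.cast_sub (Nat.one_le_iff_ne_zero.mpr hP.ne')]
    ring
  rw [f_eq (p ^ m - 1), h1]
  simp only [h2]
  push_cast
  rfl

lemma diff_bound (h2 : p ≠ 2) (e : ℕ) :
    ‖((f (p ^ (e+1) - 1) - f (p ^ e - 1) : ℚ) : ℚ_[p])‖ ≤ (p:ℝ) ^ (-(e+1:ℤ)) := by
  have hp1 : 1 < p := hp.out.one_lt
  have hp0 : 0 < p := by omega
  have hpQ : (p : ℚ_[p]) ≠ 0 := Nat.cast_ne_zero.mpr hp0.ne'
  have hpR : (1:ℝ) < p := by exact_mod_cast hp1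
  have hpR0 : (0:ℝ) < p := by linarith
  set A : ℕ → ℚ_[p] := fun j => (p:ℚ_[p]) ^ (e+1) / (((p:ℚ_[p]) ^ (e+1) - j) * 2 ^ j) with hA
  set B : ℕ → ℚ_[p] := fun j => (p:ℚ_[p]) ^ e / (((p:ℚ_[p]) ^ e - j) * 2 ^ j) with hB
  have hcast : ((f (p ^ (e+1) - 1) - f (p ^ e - 1) : ℚ) : ℚ_[p]) =
      (∑ j ∈ Finset.range (p ^ (e+1)), A j) - ∑ j ∈ Finset.range (p ^ e), B j := by
    push_cast [fpow_cast (p := p) hp0]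
    rfl
  -- reindex the multiples of p
  have hN : p ^ (e+1) = p * p ^ e := by ring
  have hre : ∑ j ∈ (Finset.range (p ^ (e+1))).filter (fun j => p ∣ j), A j
      = ∑ i ∈ Finset.range (p ^ e), A (p * i) := by
    refine (Finset.sum_nbij' (fun i => p * i) (fun j => j / p) ?_ ?_ ?_ ?_ ?_).symm
    · intro a ha
      rw [Finset.mem_filter, Finset.mem_range]
      refine ⟨?_, Dvd.intro a rfl⟩
      rw [hN]
      exact (Nat.mul_lt_mul_left hp0).mpr (Finset.mem_range.mp ha)
    · intro b hb
      rw [Finset.mem_filter, Finset.mem_range] at hb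
      rw [Finset.mem_range]
      obtain ⟨hlt, hdvd⟩ := hb
      exact Nat.div_lt_of_lt_mul (by rwa [← hN])
    · intro a _
      exact Nat.mul_div_cancel_left a hp0
    · intro b hb
      rw [Finset.mem_filter] at hb
      exact Nat.mul_div_cancel' hb.2
    · intro a _
      rfl
  have hsplit : ((f (p ^ (e+1) - 1) - f (p ^ e - 1) : ℚ) : ℚ_[p]) =
      (∑ i ∈ Finset.range (p ^ e), (A (p * i) - B i)) +
      ∑ j ∈ (Finset.range (p ^ (e+1))).filter (fun j => ¬ p ∣ j), A j := by
    rw [hcast, ← Finset.sum_filter_add_sum_filter_not (Finset.range (p ^ (e+1)))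
      (fun j => p ∣ j) A, hre, Finset.sum_sub_distrib]
    ring
  rw [hsplit]
  have hCpos : (0:ℝ) ≤ (p:ℝ) ^ (-(e+1:ℤ)) := le_of_lt (zpow_pos hpR0 _)
  refine le_trans (Padic.nonarchimedean _ _) (max_le ?_ ?_)
  · -- multiples of p
    refine padic_nonarch_sum _ _ hCpos ?_
    intro i hi
    rcases Nat.eq_zero_or_pos i with hi0 | hi0
    · subst hi0
      have : A (p * 0) - B 0 = 0 := by
        simp only [hA, hB, Nat.mul_zero, Nat.cast_zero, sub_zero, pow_zero, mul_one]
        rw [div_self (pow_ne_zero _ hpQ), div_self (pow_ne_zero _ hpQ), sub_self]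
      rw [this, norm_zero]
      exact hCpos
    · have hilt : i < p ^ e := Finset.mem_range.mp hi
      obtain ⟨t, hte, hnorm, hdvd⟩ := struct_lemma h2 e i hi0 hilt
      -- rewrite the ℤ-cast norm
      have hnorm' : ‖((p:ℚ_[p]) ^ e - i)‖ = (p:ℝ) ^ (-(t:ℤ)) := by
        rw [← hnorm]; congr 1; push_cast; ring
      have hden_ne : ((p:ℚ_[p]) ^ e - i) ≠ 0 := by
        intro h
        rw [h, norm_zero] at hnorm'
        exact absurd hnorm'.symm (ne_of_gt (zpow_pos hpR0 _))
      -- algebraic identity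
      have hpow2 : (2:ℚ_[p]) ^ (p * i) = 2 ^ ((p - 1) * i) * 2 ^ i := by
        rw [← pow_add]
        congr 1
        have h1 : i ≤ p * i := Nat.le_mul_of_pos_left i hp0
        have h3 : (p - 1) * i = p * i - i := by rw [Nat.sub_mul, one_mul]
        omega
      have key : A (p * i) - B i =
          -((p:ℚ_[p]) ^ e * ((2:ℚ_[p]) ^ ((p - 1) * i) - 1)) /
            (((p:ℚ_[p]) ^ e - i) * 2 ^ (p * i)) := by
        simp only [hA, hB]
        have hNi : ((p:ℚ_[p]) ^ (e+1) - (p * i : ℕ)) = p * ((p:ℚ_[p]) ^ e - i) := by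
          push_cast; ring
        rw [hNi, hpow2]
        have h2ne : (2:ℚ_[p]) ≠ 0 := by
          intro h
          have := norm_two_pow (p := p) h2 1
          rw [pow_one, h, norm_zero] at this
          norm_num at this
        field_simp
        ring
      rw [key]
      -- norm estimate
      have hnum : ‖(2:ℚ_[p]) ^ ((p - 1) * i) - 1‖ ≤ (p:ℝ) ^ (-(t+1:ℤ)) := by
        have := (Padic.norm_int_le_pow_iff_dvd (p := p)
          ((2:ℤ) ^ ((p - 1) * i) - 1) (t+1)).mpr (by exact_mod_cast hdvd)
        push_cast at this
        convert this using 2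
      rw [norm_div, norm_neg, norm_mul, norm_mul, Padic.norm_p_pow, hnorm',
        norm_two_pow h2, mul_one]
      calc (p:ℝ) ^ (-(e:ℤ)) * ‖(2:ℚ_[p]) ^ ((p - 1) * i) - 1‖ / (p:ℝ) ^ (-(t:ℤ))
          ≤ (p:ℝ) ^ (-(e:ℤ)) * (p:ℝ) ^ (-(t+1:ℤ)) / (p:ℝ) ^ (-(t:ℤ)) := by
            gcongr
        _ = (p:ℝ) ^ (-(e+1:ℤ)) := by
            rw [← zpow_add₀ hpR0.ne', div_eq_iff (ne_of_gt (zpow_pos hpR0 _)),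
              ← zpow_add₀ hpR0.ne']
            congr 1
            ring
  · -- non-multiples of p
    refine padic_nonarch_sum _ _ hCpos ?_
    intro j hj
    rw [Finset.mem_filter, Finset.mem_range] at hj
    obtain ⟨hlt, hnd⟩ := hj
    have hndZ : ¬ (p:ℤ) ∣ ((p:ℤ) ^ (e+1) - j) := by
      intro hd
      have hpp : (p:ℤ) ∣ (p:ℤ) ^ (e+1) := dvd_pow_self _ (Nat.succ_ne_zero e)
      have : (p:ℤ) ∣ (j:ℤ) := by
        have := dvd_sub hpp hd
        simpa using this
      exact hnd (by exact_mod_cast this)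
    have hden : ‖((p:ℚ_[p]) ^ (e+1) - j)‖ = 1 := by
      have := norm_int_unit (p := p) hndZ
      push_cast at this
      exact this
    have : ‖A j‖ = (p:ℝ) ^ (-(e+1:ℤ)) := by
      simp only [hA]
      rw [norm_div, norm_mul, hden, norm_two_pow h2, one_mul, div_one,
        Padic.norm_p_pow]
      push_cast
      ring_nf
    rw [this]


lemma modp_bound (h2 : p ≠ 2) (e : ℕ) (_he : 0 < e) :
    ‖((f (p ^ e - 1) - 1 : ℚ) : ℚ_[p])‖ ≤ (p:ℝ)⁻¹ := by
  have hp1 : 1 < p := hp.out.one_lt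
  have hp0 : 0 < p := by omega
  have hpQ : (p : ℚ_[p]) ≠ 0 := Nat.cast_ne_zero.mpr hp0.ne'
  have hpR : (1:ℝ) < p := by exact_mod_cast hp1
  have hpR0 : (0:ℝ) < p := by linarith
  have hP : 0 < p ^ e := pow_pos hp0 e
  set B : ℕ → ℚ_[p] := fun j => (p:ℚ_[p]) ^ e / (((p:ℚ_[p]) ^ e - j) * 2 ^ j) with hB
  have hcast : ((f (p ^ e - 1) - 1 : ℚ) : ℚ_[p]) = ∑ j ∈ Finset.Ico 1 (p ^ e), B j := by
    have h0 : ((f (p ^ e - 1) : ℚ) : ℚ_[p]) = ∑ j ∈ Finset.range (p ^ e), B j :=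
      fpow_cast hp0 e
    have hsum : ∑ j ∈ Finset.range (p ^ e), B j = B 0 + ∑ j ∈ Finset.Ico 1 (p ^ e), B j := by
      rw [Finset.range_eq_Ico, Finset.sum_eq_sum_Ico_succ_bot hP]
    have hB0 : B 0 = 1 := by
      simp only [hB, Nat.cast_zero, sub_zero, pow_zero, mul_one]
      exact div_self (pow_ne_zero _ hpQ)
    push_cast
    rw [h0, hsum, hB0]
    ring
  rw [hcast]
  refine padic_nonarch_sum _ _ (by positivity) ?_
  intro j hj
  rw [Finset.mem_Ico] at hj
  obtain ⟨t, hte, hnorm, _⟩ := struct_lemma h2 e j (by omega) hj.2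
  have hnorm' : ‖((p:ℚ_[p]) ^ e - j)‖ = (p:ℝ) ^ (-(t:ℤ)) := by
    rw [← hnorm]; congr 1; push_cast; ring
  have : ‖B j‖ = (p:ℝ) ^ ((t:ℤ) - e) := by
    simp only [hB]
    rw [norm_div, norm_mul, hnorm', norm_two_pow h2, mul_one, Padic.norm_p_pow,
      ← zpow_sub₀ hpR0.ne']
    congr 1
    ring
  rw [this]
  have : (p:ℝ)⁻¹ = (p:ℝ) ^ (-1:ℤ) := by simp
  rw [this]
  exact zpow_le_zpow_right₀ (le_of_lt hpR) (by omega)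

end main

theorem stmt_14 (p : ℕ) [hp : Fact p.Prime] (hodd : Odd p) :
    CauchySeq (fun e : ℕ => ((f (p ^ e - 1) : ℚ) : ℚ_[p])) ∧
    ∀ e : ℕ, f (p ^ e - 1) - 1 = 0 ∨ 1 ≤ padicValRat p (f (p ^ e - 1) - 1) := by
  have hp1 : 1 < p := hp.out.one_lt
  have h2 : p ≠ 2 := by
    rintro rfl
    simp [Nat.odd_iff] at hodd
  have hpR : (1:ℝ) < p := by exact_mod_cast hp1
  have hpR0 : (0:ℝ) < p := by linarith
  constructor
  · apply cauchySeq_of_le_geometric (r := (p:ℝ)⁻¹) (C := 1)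
    · rw [inv_lt_one₀ hpR0]
      exact hpR
    · intro n
      rw [dist_eq_norm, ← norm_neg]
      have heq : -(((f (p ^ n - 1) : ℚ) : ℚ_[p]) - ((f (p ^ (n+1) - 1) : ℚ) : ℚ_[p]))
          = ((f (p ^ (n+1) - 1) - f (p ^ n - 1) : ℚ) : ℚ_[p]) := by
        push_cast
        ring
      rw [heq]
      refine le_trans (diff_bound h2 n) ?_
      rw [one_mul, inv_pow, ← zpow_natCast (p:ℝ), ← zpow_neg]
      exact zpow_le_zpow_right₀ (le_of_lt hpR) (by omega)
  · intro e
    rcases Nat.eq_zero_or_pos e with rfl | he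
    · left
      simp [f]
    · by_cases hq : f (p ^ e - 1) - 1 = 0
      · left; exact hq
      · right
        have hb := modp_bound h2 e he
        rw [Padic.eq_padicNorm, padicNorm.eq_zpow_of_nonzero hq] at hb
        have hcast : ((((p:ℚ)) ^ (-padicValRat p (f (p ^ e - 1) - 1)) : ℚ) : ℝ)
            = (p:ℝ) ^ (-padicValRat p (f (p ^ e - 1) - 1)) := by
          push_cast
          ring
        rw [hcast] at hb
        have hb' : (p:ℝ) ^ (-padicValRat p (f (p ^ e - 1) - 1)) ≤ (p:ℝ) ^ (-1:ℤ) := by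
          rw [zpow_neg_one]
          exact hb
        have := (zpow_le_zpow_iff_right₀ hpR).mp hb'
        omega
end

section
/- For a prime p > 3 and any integer k ≥ 0, ∏_{i=1}^{p-1} (pk + i) ≡ ∏_{i=1}^{p-1} (pk + i - m) (mod p^{e+2}) whenever m is divisible by p^e with e ≥ 1. Equivalently, for e ≥ 1 and b not divisible by p, ∏_{i=1}^{p-1}(pk+i) ≡ ∏_{i=1}^{p-1}(pk+i-b·p^e) mod p^{e+2}. -/
open Polynomial Finset

lemma cube_expand (q : Polynomial ℤ) (y : ℤ) :
    y ^ 3 ∣ q.eval y - (q.coeff 0 + q.coeff 1 * y + q.coeff 2 * y ^ 2) := by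
  have h : q.natDegree < q.natDegree + 3 := by omega
  rw [Polynomial.eval_eq_sum_range' h, Finset.range_eq_Ico,
    ← Finset.sum_Ico_consecutive _ (Nat.zero_le 3) (by omega : 3 ≤ q.natDegree + 3)]
  have h3 : ∑ i ∈ Finset.Ico 0 3, q.coeff i * y ^ i
      = q.coeff 0 + q.coeff 1 * y + q.coeff 2 * y ^ 2 := by
    rw [← Finset.range_eq_Ico]
    simp [Finset.sum_range_succ]
  rw [h3, add_sub_cancel_left]
  exact Finset.dvd_sum fun i hi => Dvd.dvd.mul_left (pow_dvd_pow y (Finset.mem_Ico.mp hi).1) _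

lemma prod_univ_XsubC (p : ℕ) [Fact p.Prime] :
    ∏ a : ZMod p, (X - C a) = X ^ p - X := by
  have hp1 : 1 < p := (Fact.out : p.Prime).one_lt
  have hcard : Fintype.card (ZMod p) = p := ZMod.card p
  have hroots : (X ^ p - X : (ZMod p)[X]).roots = Finset.univ.val := by
    have := FiniteField.roots_X_pow_card_sub_X (ZMod p)
    rwa [hcard] at this
  have hmonic : (X ^ p - X : (ZMod p)[X]).Monic := by
    have he : (X ^ p - X : (ZMod p)[X]) = X ^ ((p-1)+1) - X := by
      rw [Nat.sub_add_cancel hp1.le]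
    rw [he]
    apply monic_X_pow_sub
    rw [degree_X]
    exact_mod_cast (show 1 < p - 1 + 1 by omega)
  have hdeg : (X ^ p - X : (ZMod p)[X]).natDegree = p :=
    FiniteField.X_pow_card_sub_X_natDegree_eq (ZMod p) hp1
  have hsplits : Splits (X ^ p - X : (ZMod p)[X]) := by
    rw [splits_iff_card_roots, hroots, hdeg]
    simp [hcard]
  have := hsplits.eq_prod_roots_of_monic hmonic
  rw [hroots] at this
  rw [this]
  rfl

lemma map_g (p : ℕ) (hp : p.Prime) (hp3 : 3 < p) :
    (∏ i ∈ Finset.Icc 1 (p - 1), (X + C (i:ℤ))).map (Int.castRingHom (ZMod p))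
      = X ^ (p - 1) - 1 := by
  haveI : Fact p.Prime := ⟨hp⟩
  have h1 : (∏ i ∈ Finset.Icc 1 (p - 1), (X + C (i:ℤ))).map (Int.castRingHom (ZMod p))
      = ∏ i ∈ Finset.Icc 1 (p - 1), (X + C ((i:ℕ) : ZMod p)) := by
    rw [Polynomial.map_prod]
    refine Finset.prod_congr rfl fun i _ => ?_
    simp [Polynomial.map_add]
  rw [h1]
  have h2 : ∏ i ∈ Finset.Icc 1 (p - 1), (X + C ((i:ℕ) : ZMod p))
      = ∏ a ∈ Finset.univ.erase (0 : ZMod p), (X - C a) := by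
    refine Finset.prod_nbij' (fun i => -(i : ZMod p)) (fun a => (-a).val) ?_ ?_ ?_ ?_ ?_
    · intro i hi
      obtain ⟨h1i, h2i⟩ := Finset.mem_Icc.mp hi
      refine Finset.mem_erase.mpr ⟨?_, Finset.mem_univ _⟩
      rw [neg_ne_zero, Ne, ZMod.natCast_eq_zero_iff]
      intro hdvd
      have := Nat.le_of_dvd (by omega) hdvd
      omega
    · intro a ha
      have ha0 : a ≠ 0 := (Finset.mem_erase.mp ha).1
      have hna : (-a) ≠ 0 := neg_ne_zero.mpr ha0
      have hval : (-a).val ≠ 0 := fun h => hna ((ZMod.val_eq_zero _).mp h)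
      have hlt : (-a).val < p := ZMod.val_lt _
      exact Finset.mem_Icc.mpr ⟨by omega, by omega⟩
    · intro i hi
      obtain ⟨h1i, h2i⟩ := Finset.mem_Icc.mp hi
      rw [neg_neg]
      exact ZMod.val_natCast_of_lt (by omega)
    · intro a ha
      simp [ZMod.natCast_val, ZMod.cast_id]
    · intro i hi
      rw [map_neg, sub_neg_eq_add]
  rw [h2]
  have h3 : (X : (ZMod p)[X]) * ∏ a ∈ Finset.univ.erase (0 : ZMod p), (X - C a)
      = X ^ p - X := by
    calc (X : (ZMod p)[X]) * ∏ a ∈ Finset.univ.erase (0 : ZMod p), (X - C a)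
        = (X - C (0 : ZMod p)) * ∏ a ∈ Finset.univ.erase (0 : ZMod p), (X - C a) := by
          rw [map_zero, sub_zero]
      _ = ∏ a : ZMod p, (X - C a) :=
          Finset.mul_prod_erase Finset.univ (fun a => X - C a) (Finset.mem_univ (0 : ZMod p))
      _ = X ^ p - X := prod_univ_XsubC p
  have hX : (X : (ZMod p)[X]) ≠ 0 := X_ne_zero
  apply mul_left_cancel₀ hX
  rw [h3, mul_sub, mul_one, ← pow_succ', Nat.sub_add_cancel (by omega : 1 ≤ p)]

lemma coeff_dvd (p : ℕ) (hp : p.Prime) (hp3 : 3 < p) (n : ℕ) (hn1 : n ≠ 0) (hn : n < p - 1) :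
    (p : ℤ) ∣ (∏ i ∈ Finset.Icc 1 (p - 1), (X + C (i:ℤ))).coeff n := by
  haveI : Fact p.Prime := ⟨hp⟩
  have h := congrArg (fun q => Polynomial.coeff q n) (map_g p hp hp3)
  simp only [Polynomial.coeff_map, Polynomial.coeff_sub, Polynomial.coeff_X_pow,
    Polynomial.coeff_one, if_neg (Nat.ne_of_lt hn), if_neg hn1] at h
  rw [sub_zero] at h
  rw [← ZMod.intCast_zmod_eq_zero_iff_dvd]
  exact h

lemma eval_neg_p (p : ℕ) (hp : p.Prime) (hp3 : 3 < p) :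
    (∏ i ∈ Finset.Icc 1 (p - 1), (X + C (i:ℤ))).eval (-(p:ℤ))
      = (∏ i ∈ Finset.Icc 1 (p - 1), (X + C (i:ℤ))).eval 0 := by
  simp only [Polynomial.eval_prod, Polynomial.eval_add, Polynomial.eval_X, Polynomial.eval_C,
    zero_add]
  have h1 : ∏ i ∈ Finset.Icc 1 (p - 1), (-(p:ℤ) + (i:ℤ))
      = ∏ j ∈ Finset.Icc 1 (p - 1), (-(j:ℤ)) := by
    refine Finset.prod_nbij' (fun i => p - i) (fun j => p - j) ?_ ?_ ?_ ?_ ?_ <;>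
      intro i hi <;> obtain ⟨h1i, h2i⟩ := Finset.mem_Icc.mp hi
    · exact Finset.mem_Icc.mpr ⟨by omega, by omega⟩
    · exact Finset.mem_Icc.mpr ⟨by omega, by omega⟩
    · omega
    · omega
    · have : ((p - i : ℕ) : ℤ) = (p : ℤ) - i := by
        push_cast [Nat.cast_sub (by omega : i ≤ p)]; ring
      rw [this]; ring
  rw [h1]
  have h2 : ∏ j ∈ Finset.Icc 1 (p - 1), (-(j:ℤ))
      = (-1) ^ (Finset.Icc 1 (p - 1)).card * ∏ j ∈ Finset.Icc 1 (p - 1), (j:ℤ) := by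
    rw [← Finset.prod_const, ← Finset.prod_mul_distrib]
    exact Finset.prod_congr rfl fun j _ => by ring
  rw [h2, Nat.card_Icc]
  have heven : Even (p - 1 + 1 - 1) := by
    have : Odd p := hp.odd_of_ne_two (by omega)
    obtain ⟨m, hm⟩ := this
    simp only [Nat.add_sub_cancel]
    exact ⟨m, by omega⟩
  rw [heven.neg_one_pow, one_mul]

lemma coeff_one_dvd (p : ℕ) (hp : p.Prime) (hp3 : 3 < p) :
    (p : ℤ)^2 ∣ (∏ i ∈ Finset.Icc 1 (p - 1), (X + C (i:ℤ))).coeff 1 := by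
  set g : Polynomial ℤ := ∏ i ∈ Finset.Icc 1 (p - 1), (X + C (i:ℤ)) with hg
  have hc2 : (p : ℤ) ∣ g.coeff 2 := coeff_dvd p hp hp3 2 (by omega) (by omega)
  have hcube := cube_expand g (-(p:ℤ))
  rw [eval_neg_p p hp hp3, ← Polynomial.coeff_zero_eq_eval_zero] at hcube
  -- hcube : (-(p:ℤ))^3 ∣ g.coeff 0 - (g.coeff 0 + g.coeff 1 * (-p) + g.coeff 2 * (-p)^2)
  have h3 : (p:ℤ)^3 ∣ g.coeff 1 * p - g.coeff 2 * p^2 := by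
    have := (dvd_neg.mpr hcube)
    have heq : -(g.coeff 0 - (g.coeff 0 + g.coeff 1 * (-(p:ℤ)) + g.coeff 2 * (-(p:ℤ))^2))
        = -(g.coeff 1 * p) + g.coeff 2 * p^2 := by ring
    rw [heq] at this
    have hneg : ((-(p:ℤ))^3 : ℤ) = -((p:ℤ)^3) := by ring
    rw [hneg, neg_dvd] at this
    have := dvd_neg.mpr this
    calc (p:ℤ)^3 ∣ -(-(g.coeff 1 * ↑p) + g.coeff 2 * ↑p ^ 2) := this
      _ = g.coeff 1 * p - g.coeff 2 * p^2 := by ring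
  have h4 : (p:ℤ)^3 ∣ g.coeff 2 * p^2 := by
    obtain ⟨c, hc⟩ := hc2
    exact ⟨c, by rw [hc]; ring⟩
  have h5 : (p:ℤ)^3 ∣ g.coeff 1 * p := by
    have := dvd_add h3 h4
    simpa using this
  have hp0 : (p:ℤ) ≠ 0 := by exact_mod_cast hp.ne_zero
  rw [pow_succ] at h5
  exact (mul_dvd_mul_iff_right hp0).mp h5

theorem stmt_16 (p : ℕ) (hp : p.Prime) (hp3 : 3 < p) (k : ℕ) (e : ℕ) (he : 1 ≤ e)
    (b : ℤ) :
    (∏ i ∈ Finset.Icc 1 (p - 1), ((p : ℤ) * k + i)) ≡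
      (∏ i ∈ Finset.Icc 1 (p - 1), ((p : ℤ) * k + i - b * (p : ℤ) ^ e))
      [ZMOD (p : ℕ) ^ (e + 2)] := by
  set g : Polynomial ℤ := ∏ i ∈ Finset.Icc 1 (p - 1), (X + C (i:ℤ)) with hgdef
  set x : ℤ := (p : ℤ) * k with hxdef
  set t : ℤ := b * (p : ℤ) ^ e with htdef
  have hLHS : (∏ i ∈ Finset.Icc 1 (p - 1), ((p : ℤ) * k + i)) = g.eval x := by
    rw [hgdef, Polynomial.eval_prod]
    exact Finset.prod_congr rfl fun i _ => by simp [hxdef]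
  have hRHS : (∏ i ∈ Finset.Icc 1 (p - 1), ((p : ℤ) * k + i - b * (p : ℤ) ^ e))
      = g.eval (x - t) := by
    rw [hgdef, Polynomial.eval_prod]
    refine Finset.prod_congr rfl fun i _ => by simp [hxdef, htdef]; ring
  rw [hLHS, hRHS]
  suffices h : ((p : ℤ) ^ (e + 2)) ∣ g.eval (x - t) - g.eval x by
    exact Int.modEq_iff_dvd.mpr h
  -- divisibility of hasse derivatives
  have hc1 : (p : ℤ)^2 ∣ g.coeff 1 := coeff_one_dvd p hp hp3
  have hc2 : (p : ℤ) ∣ g.coeff 2 := coeff_dvd p hp hp3 2 (by omega) (by omega)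
  have hp4 : p ≠ 4 := by rintro rfl; norm_num at hp
  have hc3 : (p : ℤ) ∣ g.coeff 3 := coeff_dvd p hp hp3 3 (by omega) (by omega)
  have hx : (p : ℤ) ∣ x := ⟨k, rfl⟩
  have hD1 : (p : ℤ)^2 ∣ (hasseDeriv 1 g).eval x := by
    have hcube := cube_expand (hasseDeriv 1 g) x
    have e0 : (hasseDeriv 1 g).coeff 0 = g.coeff 1 := by
      rw [Polynomial.hasseDeriv_coeff]; norm_num
    have e1 : (hasseDeriv 1 g).coeff 1 = 2 * g.coeff 2 := by
      rw [Polynomial.hasseDeriv_coeff]; norm_num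
    have e2 : (hasseDeriv 1 g).coeff 2 = 3 * g.coeff 3 := by
      rw [Polynomial.hasseDeriv_coeff]; norm_num
    rw [e0, e1, e2] at hcube
    obtain ⟨w, hw⟩ := hcube
    have hval : (hasseDeriv 1 g).eval x
        = g.coeff 1 + 2 * g.coeff 2 * x + 3 * g.coeff 3 * x ^ 2 + x ^ 3 * w := by
      linear_combination hw
    rw [hval]
    have d1 : (p : ℤ)^2 ∣ 2 * g.coeff 2 * x := by
      obtain ⟨c, hcc⟩ := hc2; obtain ⟨d, hdd⟩ := hx
      exact ⟨2 * c * d, by rw [hcc, hdd]; ring⟩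
    have d2 : (p : ℤ)^2 ∣ 3 * g.coeff 3 * x ^ 2 := by
      obtain ⟨d, hdd⟩ := hx
      exact ⟨3 * g.coeff 3 * d ^ 2, by rw [hdd]; ring⟩
    have d3 : (p : ℤ)^2 ∣ x ^ 3 * w := by
      obtain ⟨d, hdd⟩ := hx
      exact ⟨p * d ^ 3 * w, by rw [hdd]; ring⟩
    exact dvd_add (dvd_add (dvd_add hc1 d1) d2) d3
  have hD2 : (p : ℤ) ∣ (hasseDeriv 2 g).eval x := by
    have hsub := Polynomial.sub_dvd_eval_sub x 0 (hasseDeriv 2 g)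
    rw [sub_zero] at hsub
    have e0 : (hasseDeriv 2 g).eval 0 = g.coeff 2 := by
      rw [← Polynomial.coeff_zero_eq_eval_zero, Polynomial.hasseDeriv_coeff]; norm_num
    obtain ⟨c, hcc⟩ := dvd_trans hx hsub
    obtain ⟨d, hdd⟩ := hc2
    rw [e0] at hcc
    exact ⟨c + d, by linear_combination hcc + hdd⟩
  -- Taylor expansion
  have hcube := cube_expand (taylor x g) (-t)
  rw [Polynomial.taylor_eval, Polynomial.taylor_coeff_zero, Polynomial.taylor_coeff,
    Polynomial.taylor_coeff] at hcube
  have heval : g.eval (-t + x) = g.eval (x - t) := by rw [show -t + x = x - t by ring]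
  rw [heval] at hcube
  obtain ⟨w, hw⟩ := hcube
  have hsum : g.eval (x - t) - g.eval x
      = -((hasseDeriv 1 g).eval x * t) + (hasseDeriv 2 g).eval x * t ^ 2 + -(t ^ 3 * w) := by
    linear_combination hw
  rw [hsum]
  have hA : (p : ℤ) ^ (e + 2) ∣ (hasseDeriv 1 g).eval x * t := by
    rw [show e + 2 = 2 + e by ring, pow_add]
    exact mul_dvd_mul hD1 ⟨b, by rw [htdef]; ring⟩
  have hB : (p : ℤ) ^ (e + 2) ∣ (hasseDeriv 2 g).eval x * t ^ 2 := by
    refine dvd_trans (pow_dvd_pow (p:ℤ) (by omega : e + 2 ≤ 1 + 2 * e)) ?_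
    rw [pow_add]
    exact mul_dvd_mul (by simpa using hD2) ⟨b ^ 2, by rw [htdef]; ring⟩
  have hC : (p : ℤ) ^ (e + 2) ∣ t ^ 3 * w := by
    refine dvd_mul_of_dvd_left ?_ w
    refine dvd_trans (pow_dvd_pow (p:ℤ) (by omega : e + 2 ≤ 3 * e)) ⟨b ^ 3, by rw [htdef]; ring⟩
  exact dvd_add (dvd_add ((dvd_neg).mpr hA) hB) ((dvd_neg).mpr hC)
end
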